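/- Let π : [0,1] × [0,1] → ℝ be continuous and weakly consistent. Then, setting q = π(1,0), one has π(x,y) = q·x + (1−q)·y for all x, y ∈ [0,1]. -/

import Mathlib

open Filter Topology

/-- Auxiliary: an additive-on-[0,1] function continuous on [0,1] is linear there. -/
lemma aux_linear (g : ℝ → ℝ) (hc : ContinuousOn g (Set.Icc 0 1))
    (hadd : ∀ a b : ℝ, 0 ≤ a → 0 ≤ b → a + b ≤ 1 → g (a + b) = g a + g b) :
    ∀ x ∈ Set.Icc (0:ℝ) 1, g x = x * g 1 := by
  have hg0 : g 0 = 0 := by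
    have := hadd 0 0 le_rfl le_rfl (by norm_num)
    simpa using this
  -- rational multiples
  have hrat : ∀ n : ℕ, 0 < n → ∀ k : ℕ, k ≤ n → g ((k : ℝ) / n) = (k : ℝ) * g (1 / n) := by
    intro n hn k hk
    induction k with
    | zero => simpa using hg0
    | succ k ih =>
      have hk' : k ≤ n := Nat.le_of_succ_le hk
      have hnpos : (0:ℝ) < n := by exact_mod_cast hn
      have h1 : ((k:ℝ)+1) / n = (k:ℝ)/n + 1/n := by ring
      have h2 : (k:ℝ)/n + 1/n ≤ 1 := by
        rw [← add_div, div_le_one hnpos]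
        exact_mod_cast hk
      have := hadd ((k:ℝ)/n) (1/n) (by positivity) (by positivity) h2
      push_cast
      rw [h1, this, ih hk']
      ring
  have hratk : ∀ n : ℕ, 0 < n → ∀ k : ℕ, k ≤ n → g ((k : ℝ) / n) = ((k : ℝ) / n) * g 1 := by
    intro n hn k hk
    have hnpos : (0:ℝ) < n := by exact_mod_cast hn
    have h1 : g 1 = (n : ℝ) * g (1 / n) := by
      have := hrat n hn n le_rfl
      rwa [div_self hnpos.ne'] at this
    rw [hrat n hn k hk, h1]
    field_simp
  intro x hx
  obtain ⟨hx0, hx1⟩ := hx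
  -- sequence of rationals tending to x
  set u : ℕ → ℝ := fun n => (⌊x * n⌋₊ : ℝ) / n with hu
  have hmem : ∀ n : ℕ, 0 < n → u n ∈ Set.Icc (0:ℝ) 1 := by
    intro n hn
    have hnpos : (0:ℝ) < n := by exact_mod_cast hn
    constructor
    · positivity
    · rw [div_le_one hnpos]
      have : ⌊x * n⌋₊ ≤ n := by
        calc ⌊x * n⌋₊ ≤ ⌊(n:ℝ)⌋₊ := Nat.floor_le_floor (by nlinarith)
        _ = n := Nat.floor_natCast n
      exact_mod_cast this
  have hval : ∀ n : ℕ, 0 < n → g (u n) = u n * g 1 := by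
    intro n hn
    apply hratk n hn
    have hnpos : (0:ℝ) < n := by exact_mod_cast hn
    have : (⌊x * n⌋₊ : ℝ) ≤ (n : ℝ) := by
      exact_mod_cast (Nat.floor_le_floor (show x * n ≤ (n:ℝ) by nlinarith)).trans_eq
        (Nat.floor_natCast n)
    exact_mod_cast this
  have htend : Tendsto u atTop (𝓝 x) :=
    (tendsto_nat_floor_mul_div_atTop hx0).comp tendsto_natCast_atTop_atTop
  have hcx : ContinuousWithinAt g (Set.Icc 0 1) x := hc x ⟨hx0, hx1⟩
  have hmem' : ∀ᶠ n in atTop, u n ∈ Set.Icc (0:ℝ) 1 :=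
    eventually_atTop.2 ⟨1, fun n hn => hmem n hn⟩
  have h1 : Tendsto (fun n => g (u n)) atTop (𝓝 (g x)) :=
    hcx.tendsto.comp (tendsto_nhdsWithin_iff.2 ⟨htend, hmem'⟩)
  have h2 : Tendsto (fun n => g (u n)) atTop (𝓝 (x * g 1)) := by
    have h3 : Tendsto (fun n => u n * g 1) atTop (𝓝 (x * g 1)) :=
      htend.mul_const _
    refine h3.congr' ?_
    filter_upwards [eventually_atTop.2 ⟨1, fun n hn => hn⟩] with n hn
    exact (hval n hn).symm
  exact tendsto_nhds_unique h1 h2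

theorem stmt_4 (π : ℝ → ℝ → ℝ)
    (hcont : ContinuousOn (fun p : ℝ × ℝ => π p.1 p.2)
      (Set.Icc (0:ℝ) 1 ×ˢ Set.Icc (0:ℝ) 1))
    (hWC : ∀ (n : ℕ) (x y : Fin n → ℝ),
      (∀ i, 0 ≤ x i) → (∑ i, x i = 1) → (∀ i, 0 ≤ y i) → (∑ i, y i = 1) →
      ∑ i, π (x i) (y i) = 1) :
    ∀ x ∈ Set.Icc (0:ℝ) 1, ∀ y ∈ Set.Icc (0:ℝ) 1,
      π x y = π 1 0 * x + (1 - π 1 0) * y := by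
  -- two-term identity
  have hA : ∀ a b : ℝ, 0 ≤ a → a ≤ 1 → 0 ≤ b → b ≤ 1 →
      π a b + π (1 - a) (1 - b) = 1 := by
    intro a b ha ha1 hb hb1
    have := hWC 2 ![a, 1 - a] ![b, 1 - b]
      (by intro i; fin_cases i <;> simp <;> linarith)
      (by simp [Fin.sum_univ_two])
      (by intro i; fin_cases i <;> simp <;> linarith)
      (by simp [Fin.sum_univ_two])
    simpa [Fin.sum_univ_two] using this
  -- three-term identity
  have hB : ∀ a b c d : ℝ, 0 ≤ a → 0 ≤ b → 0 ≤ c → 0 ≤ d → a + c ≤ 1 → b + d ≤ 1 →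
      π a b + π c d + π (1 - a - c) (1 - b - d) = 1 := by
    intro a b c d ha hb hc hd hac hbd
    have := hWC 3 ![a, c, 1 - a - c] ![b, d, 1 - b - d]
      (by intro i; fin_cases i <;> simp <;> linarith)
      (by simp [Fin.sum_univ_three])
      (by intro i; fin_cases i <;> simp <;> linarith)
      (by simp [Fin.sum_univ_three])
    have h := this
    rw [Fin.sum_univ_three] at h
    simpa using h
  -- additivity
  have padd : ∀ a b c d : ℝ, 0 ≤ a → 0 ≤ b → 0 ≤ c → 0 ≤ d → a + c ≤ 1 → b + d ≤ 1 →
      π (a + c) (b + d) = π a b + π c d := by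
    intro a b c d ha hb hc hd hac hbd
    have h1 := hB a b c d ha hb hc hd hac hbd
    have h2 := hA (a + c) (b + d) (by linarith) hac (by linarith) hbd
    have : (1:ℝ) - (a + c) = 1 - a - c := by ring
    rw [this] at h2
    have : (1:ℝ) - (b + d) = 1 - b - d := by ring
    rw [this] at h2
    linarith
  -- linearity in first slot
  have hg : ∀ x ∈ Set.Icc (0:ℝ) 1, π x 0 = x * π 1 0 := by
    apply aux_linear
    · exact hcont.comp (Continuous.continuousOn (by continuity))
        (fun x hx => Set.mk_mem_prod hx (by norm_num))
    · intro a b ha hb hab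
      have := padd a 0 b 0 ha le_rfl hb le_rfl hab (by norm_num)
      simpa using this
  have hh : ∀ y ∈ Set.Icc (0:ℝ) 1, π 0 y = y * π 0 1 := by
    apply aux_linear
    · exact hcont.comp (Continuous.continuousOn (by continuity))
        (fun y hy => Set.mk_mem_prod (by norm_num) hy)
    · intro a b ha hb hab
      have := padd 0 a 0 b le_rfl ha le_rfl hb (by norm_num) hab
      simpa using this
  -- π 0 1 = 1 - π 1 0
  have h01 : π 0 1 = 1 - π 1 0 := by
    have := hA 1 0 (by norm_num) le_rfl le_rfl (by norm_num)
    simp at this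
    linarith
  intro x hx y hy
  have hsplit : π x y = π x 0 + π 0 y := by
    have := padd x 0 0 y hx.1 le_rfl le_rfl hy.1 (by simpa using hx.2) (by simpa using hy.2)
    simpa using this
  rw [hsplit, hg x hx, hh y hy, h01]
  ring
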